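/- Let A be a closed and geodesically convex subset of the l∞ plane ℝ²_∞ and let p = (p₁,p₂) ∉ A be a point such that the three sectors S₁^+(p), S₂^+(p), S₂^−(p) all intersect A. Then the horizontal ray {(p₁ + t, p₂) : t ≥ 0} intersects A; and if t₀ is the minimal such t and q = (p₁ + t₀, p₂), then d∞(a, q) ≤ d∞(a, p) for every a ∈ A. -/
import Mathlib


/-- A geodesic from `p` to `q` in a metric space: an isometric embedding of the
real interval `[0, dist p q]` sending `0` to `p` and `dist p q` to `q`. -/
def IsGeodesic {X : Type*} [MetricSpace X] (p q : X) (γ : ℝ → X) : Prop :=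
  γ 0 = p ∧ γ (dist p q) = q ∧
    ∀ s ∈ Set.Icc (0 : ℝ) (dist p q), ∀ t ∈ Set.Icc (0 : ℝ) (dist p q),
      dist (γ s) (γ t) = |s - t|

/-- A subset `A` is geodesically convex if any two of its points are joined by a
geodesic of the ambient space whose image lies in `A`. -/
def GeodConvex {X : Type*} [MetricSpace X] (A : Set X) : Prop :=
  ∀ p ∈ A, ∀ q ∈ A, ∃ γ : ℝ → X, IsGeodesic p q γ ∧
    ∀ t ∈ Set.Icc (0 : ℝ) (dist p q), γ t ∈ A

/-- The sector `S₁^ε(p)` in the `l∞` plane: points `q` with `d∞(p,q) = ε(q₁ − p₁)`. -/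
def sector1 (ε : ℝ) (p : ℝ × ℝ) : Set (ℝ × ℝ) :=
  {q | dist p q = ε * (q.1 - p.1)}

/-- The sector `S₂^ε(p)` in the `l∞` plane: points `q` with `d∞(p,q) = ε(q₂ − p₂)`. -/
def sector2 (ε : ℝ) (p : ℝ × ℝ) : Set (ℝ × ℝ) :=
  {q | dist p q = ε * (q.2 - p.2)}

lemma dist_pair (a b : ℝ × ℝ) : dist a b = max |a.1 - b.1| |a.2 - b.2| := by
  rw [Prod.dist_eq, Real.dist_eq, Real.dist_eq]

lemma coord1_le (a b : ℝ × ℝ) : |a.1 - b.1| ≤ dist a b := by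
  rw [dist_pair]; exact le_max_left _ _

lemma coord2_le (a b : ℝ × ℝ) : |a.2 - b.2| ≤ dist a b := by
  rw [dist_pair]; exact le_max_right _ _

lemma cross_ex {f : ℝ → ℝ} {a b y : ℝ} (hab : a ≤ b)
    (hf : ContinuousOn f (Set.Icc a b)) (h1 : f a ≤ y) (h2 : y ≤ f b) :
    ∃ u ∈ Set.Icc a b, f u = y := by
  obtain ⟨u, hu, hu'⟩ := intermediate_value_Icc hab hf ⟨h1, h2⟩
  exact ⟨u, hu, hu'⟩

lemma cross_ex' {f : ℝ → ℝ} {a b y : ℝ} (hab : a ≤ b)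
    (hf : ContinuousOn f (Set.Icc a b)) (h1 : f b ≤ y) (h2 : y ≤ f a) :
    ∃ u ∈ Set.Icc a b, f u = y := by
  obtain ⟨u, hu, hu'⟩ := intermediate_value_Icc' hab hf ⟨h1, h2⟩
  exact ⟨u, hu, hu'⟩

/-- A geodesic between two points whose horizontal gap dominates is a
1-Lipschitz graph over the first coordinate, lying in `A`. -/
lemma graph_h {A : Set (ℝ × ℝ)} (hgc : GeodConvex A) {x y : ℝ × ℝ}
    (hx : x ∈ A) (hy : y ∈ A) (hxy : |y.2 - x.2| ≤ y.1 - x.1) :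
    ∃ f : ℝ → ℝ, f x.1 = x.2 ∧ f y.1 = y.2 ∧
      (∀ u ∈ Set.Icc x.1 y.1, (u, f u) ∈ A) ∧
      (∀ u ∈ Set.Icc x.1 y.1, ∀ v ∈ Set.Icc x.1 y.1, |f u - f v| ≤ |u - v|) ∧
      ContinuousOn f (Set.Icc x.1 y.1) := by
  have h0 : (0:ℝ) ≤ y.1 - x.1 := le_trans (abs_nonneg _) hxy
  have hD : dist x y = y.1 - x.1 := by
    rw [dist_pair, abs_sub_comm x.2 y.2]
    rw [show |x.1 - y.1| = y.1 - x.1 by rw [abs_sub_comm, abs_of_nonneg h0]]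
    exact max_eq_left hxy
  obtain ⟨γ, ⟨hγ0, hγD, hiso⟩, hmem⟩ := hgc x hx y hy
  rw [hD] at hγD hiso hmem
  have hcoord : ∀ t ∈ Set.Icc (0:ℝ) (y.1 - x.1), (γ t).1 = x.1 + t := by
    intro t ht
    have h1 : dist (γ t) (γ 0) = |t - 0| := hiso t ht 0 ⟨le_refl 0, h0⟩
    have h2 : dist (γ t) (γ (y.1 - x.1)) = |t - (y.1 - x.1)| :=
      hiso t ht (y.1 - x.1) ⟨h0, le_refl _⟩
    rw [hγ0] at h1
    rw [hγD] at h2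
    have e1 : |(γ t).1 - x.1| ≤ t := by
      have h := coord1_le (γ t) x
      rw [h1, sub_zero, abs_of_nonneg ht.1] at h
      exact h
    have e2 : |(γ t).1 - y.1| ≤ (y.1 - x.1) - t := by
      have h' := coord1_le (γ t) y
      rw [h2] at h'
      have habs : |t - (y.1 - x.1)| = (y.1 - x.1) - t := by
        rw [abs_of_nonpos (by linarith [ht.2])]; ring
      rwa [habs] at h'
    have e1' := abs_le.mp e1
    have e2' := abs_le.mp e2
    linarith [e1'.1, e1'.2, e2'.1, e2'.2]
  have hin : ∀ u ∈ Set.Icc x.1 y.1, u - x.1 ∈ Set.Icc (0:ℝ) (y.1 - x.1) := by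
    intro u hu
    exact ⟨by linarith [hu.1], by linarith [hu.2]⟩
  have hlip : ∀ u ∈ Set.Icc x.1 y.1, ∀ v ∈ Set.Icc x.1 y.1,
      |(γ (u - x.1)).2 - (γ (v - x.1)).2| ≤ |u - v| := by
    intro u hu v hv
    have h := coord2_le (γ (u - x.1)) (γ (v - x.1))
    rw [hiso _ (hin u hu) _ (hin v hv)] at h
    have : u - x.1 - (v - x.1) = u - v := by ring
    rwa [this] at h
  refine ⟨fun u => (γ (u - x.1)).2, ?_, ?_, ?_, hlip, ?_⟩
  · show (γ (x.1 - x.1)).2 = x.2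
    rw [sub_self, hγ0]
  · show (γ (y.1 - x.1)).2 = y.2
    rw [hγD]
  · intro u hu
    have hm := hmem (u - x.1) (hin u hu)
    have he : (u, (γ (u - x.1)).2) = γ (u - x.1) := by
      rw [Prod.ext_iff]
      exact ⟨by rw [hcoord _ (hin u hu)]; ring, rfl⟩
    rw [he]; exact hm
  · have : LipschitzOnWith 1 (fun u => (γ (u - x.1)).2) (Set.Icc x.1 y.1) := by
      apply LipschitzOnWith.of_dist_le_mul
      intro u hu v hv
      rw [Real.dist_eq, Real.dist_eq, NNReal.coe_one, one_mul]
      exact hlip u hu v hv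
    exact this.continuousOn

/-- A geodesic between two points whose vertical gap dominates is a
1-Lipschitz graph over the second coordinate, lying in `A`. -/
lemma graph_v {A : Set (ℝ × ℝ)} (hgc : GeodConvex A) {x y : ℝ × ℝ}
    (hx : x ∈ A) (hy : y ∈ A) (hxy : |y.1 - x.1| ≤ y.2 - x.2) :
    ∃ g : ℝ → ℝ, g x.2 = x.1 ∧ g y.2 = y.1 ∧
      (∀ v ∈ Set.Icc x.2 y.2, (g v, v) ∈ A) ∧
      (∀ u ∈ Set.Icc x.2 y.2, ∀ v ∈ Set.Icc x.2 y.2, |g u - g v| ≤ |u - v|) ∧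
      ContinuousOn g (Set.Icc x.2 y.2) := by
  have h0 : (0:ℝ) ≤ y.2 - x.2 := le_trans (abs_nonneg _) hxy
  have hD : dist x y = y.2 - x.2 := by
    rw [dist_pair, abs_sub_comm x.1 y.1]
    rw [show |x.2 - y.2| = y.2 - x.2 by rw [abs_sub_comm, abs_of_nonneg h0]]
    exact max_eq_right hxy
  obtain ⟨γ, ⟨hγ0, hγD, hiso⟩, hmem⟩ := hgc x hx y hy
  rw [hD] at hγD hiso hmem
  have hcoord : ∀ t ∈ Set.Icc (0:ℝ) (y.2 - x.2), (γ t).2 = x.2 + t := by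
    intro t ht
    have h1 : dist (γ t) (γ 0) = |t - 0| := hiso t ht 0 ⟨le_refl 0, h0⟩
    have h2 : dist (γ t) (γ (y.2 - x.2)) = |t - (y.2 - x.2)| :=
      hiso t ht (y.2 - x.2) ⟨h0, le_refl _⟩
    rw [hγ0] at h1
    rw [hγD] at h2
    have e1 : |(γ t).2 - x.2| ≤ t := by
      have h := coord2_le (γ t) x
      rw [h1, sub_zero, abs_of_nonneg ht.1] at h
      exact h
    have e2 : |(γ t).2 - y.2| ≤ (y.2 - x.2) - t := by
      have h' := coord2_le (γ t) y
      rw [h2] at h'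
      have habs : |t - (y.2 - x.2)| = (y.2 - x.2) - t := by
        rw [abs_of_nonpos (by linarith [ht.2])]; ring
      rwa [habs] at h'
    have e1' := abs_le.mp e1
    have e2' := abs_le.mp e2
    linarith [e1'.1, e1'.2, e2'.1, e2'.2]
  have hin : ∀ u ∈ Set.Icc x.2 y.2, u - x.2 ∈ Set.Icc (0:ℝ) (y.2 - x.2) := by
    intro u hu
    exact ⟨by linarith [hu.1], by linarith [hu.2]⟩
  have hlip : ∀ u ∈ Set.Icc x.2 y.2, ∀ v ∈ Set.Icc x.2 y.2,
      |(γ (u - x.2)).1 - (γ (v - x.2)).1| ≤ |u - v| := by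
    intro u hu v hv
    have h := coord1_le (γ (u - x.2)) (γ (v - x.2))
    rw [hiso _ (hin u hu) _ (hin v hv)] at h
    have : u - x.2 - (v - x.2) = u - v := by ring
    rwa [this] at h
  refine ⟨fun u => (γ (u - x.2)).1, ?_, ?_, ?_, hlip, ?_⟩
  · show (γ (x.2 - x.2)).1 = x.1
    rw [sub_self, hγ0]
  · show (γ (y.2 - x.2)).1 = y.1
    rw [hγD]
  · intro u hu
    have hm := hmem (u - x.2) (hin u hu)
    have he : ((γ (u - x.2)).1, u) = γ (u - x.2) := by
      rw [Prod.ext_iff]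
      exact ⟨rfl, by rw [hcoord _ (hin u hu)]; ring⟩
    rw [he]; exact hm
  · have : LipschitzOnWith 1 (fun u => (γ (u - x.2)).1) (Set.Icc x.2 y.2) := by
      apply LipschitzOnWith.of_dist_le_mul
      intro u hu v hv
      rw [Real.dist_eq, Real.dist_eq, NNReal.coe_one, one_mul]
      exact hlip u hu v hv
    exact this.continuousOn

/-- If `A` contains two points on a common diagonal line through `p`, on
opposite sides of `p`, then `p ∈ A` (the `l∞` geodesic between them is unique
and passes through `p`). -/
lemma diag_mem {A : Set (ℝ × ℝ)} (hgc : GeodConvex A) (p : ℝ × ℝ) {ε s t : ℝ}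
    (hε : ε = 1 ∨ ε = -1) (hs : 0 ≤ s) (ht : 0 ≤ t)
    (hxA : (p.1 + s, p.2 + ε * s) ∈ A) (hyA : (p.1 - t, p.2 - ε * t) ∈ A) :
    p ∈ A := by
  set x : ℝ × ℝ := (p.1 + s, p.2 + ε * s) with hxdef
  set y : ℝ × ℝ := (p.1 - t, p.2 - ε * t) with hydef
  have hd : dist x y = s + t := by
    rw [dist_pair]
    have h1 : x.1 - y.1 = s + t := by
      show p.1 + s - (p.1 - t) = s + t; ring
    have h2 : x.2 - y.2 = ε * (s + t) := by
      show p.2 + ε * s - (p.2 - ε * t) = ε * (s + t); ring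
    rw [h1, h2, abs_mul]
    have hε1 : |ε| = 1 := by rcases hε with h | h <;> simp [h]
    rw [hε1, one_mul, abs_of_nonneg (by linarith)]
    simp
  obtain ⟨γ, ⟨hγ0, hγD, hiso⟩, hmem⟩ := hgc x hxA y hyA
  rw [hd] at hγD hiso hmem
  have hsmem : s ∈ Set.Icc (0:ℝ) (s + t) := ⟨hs, by linarith⟩
  have h1 : dist (γ s) x = s := by
    have := hiso s hsmem 0 ⟨le_refl 0, by linarith⟩
    rw [hγ0] at this
    rw [this, sub_zero, abs_of_nonneg hs]
  have h2 : dist (γ s) y = t := by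
    have := hiso s hsmem (s + t) ⟨by linarith, le_refl _⟩
    rw [hγD] at this
    rw [this]
    rw [show s - (s + t) = -t by ring, abs_neg, abs_of_nonneg ht]
  have e1x := abs_le.mp (h1 ▸ coord1_le (γ s) x)
  have e1y := abs_le.mp (h2 ▸ coord1_le (γ s) y)
  have e2x := abs_le.mp (h1 ▸ coord2_le (γ s) x)
  have e2y := abs_le.mp (h2 ▸ coord2_le (γ s) y)
  have hx1 : x.1 = p.1 + s := rfl
  have hy1 : y.1 = p.1 - t := rfl
  have hx2 : x.2 = p.2 + ε * s := rfl
  have hy2 : y.2 = p.2 - ε * t := rfl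
  have hc1 : (γ s).1 = p.1 := by
    rw [hx1] at e1x; rw [hy1] at e1y
    linarith [e1x.1, e1x.2, e1y.1, e1y.2]
  have hc2 : (γ s).2 = p.2 := by
    rw [hx2] at e2x; rw [hy2] at e2y
    rcases hε with h | h <;> rw [h] at e2x e2y <;>
      [skip; skip] <;> linarith [e2x.1, e2x.2, e2y.1, e2y.2]
  have : γ s = p := Prod.ext_iff.mpr ⟨hc1, hc2⟩
  rw [← this]
  exact hmem s hsmem

/-- Four sectors case: if all four sectors of `p` meet the geodesically convex
set `A`, then `p ∈ A`. Inequality form. -/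
lemma four_sectors {A : Set (ℝ × ℝ)} (hgc : GeodConvex A) (p : ℝ × ℝ)
    {b c u d : ℝ × ℝ}
    (hb : b ∈ A) (hb' : |b.2 - p.2| ≤ b.1 - p.1)
    (hc : c ∈ A) (hc' : |c.2 - p.2| ≤ p.1 - c.1)
    (hu : u ∈ A) (hu' : |u.1 - p.1| ≤ u.2 - p.2)
    (hd : d ∈ A) (hd' : |d.1 - p.1| ≤ p.2 - d.2) : p ∈ A := by
  have hub : p.1 ≤ b.1 := by linarith [abs_nonneg (b.2 - p.2)]
  have hlc : c.1 ≤ p.1 := by linarith [abs_nonneg (c.2 - p.2)]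
  have huu : p.2 ≤ u.2 := by linarith [abs_nonneg (u.1 - p.1)]
  have hld : d.2 ≤ p.2 := by linarith [abs_nonneg (d.1 - p.1)]
  have hbb := abs_le.mp hb'
  have hcc := abs_le.mp hc'
  have huub := abs_le.mp hu'
  have hdd := abs_le.mp hd'
  obtain ⟨f, hf1, hf2, hfA, hflip, hfc⟩ := graph_h hgc hc hb (by
    have h1 := abs_sub_le b.2 p.2 c.2
    rw [abs_sub_comm p.2 c.2] at h1
    linarith)
  obtain ⟨g, hg1, hg2, hgA, hglip, hgcont⟩ := graph_v hgc hd hu (by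
    have h1 := abs_sub_le u.1 p.1 d.1
    rw [abs_sub_comm p.1 d.1] at h1
    linarith)
  have hfcl : ContinuousOn f (Set.Icc c.1 p.1) :=
    hfc.mono (Set.Icc_subset_Icc le_rfl hub)
  have hfcr : ContinuousOn f (Set.Icc p.1 b.1) :=
    hfc.mono (Set.Icc_subset_Icc hlc le_rfl)
  have hgcl : ContinuousOn g (Set.Icc d.2 p.2) :=
    hgcont.mono (Set.Icc_subset_Icc le_rfl huu)
  have hgcr : ContinuousOn g (Set.Icc p.2 u.2) :=
    hgcont.mono (Set.Icc_subset_Icc hld le_rfl)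
  have hsubl : Set.Icc c.1 p.1 ⊆ Set.Icc c.1 b.1 := Set.Icc_subset_Icc le_rfl hub
  have hsubr : Set.Icc p.1 b.1 ⊆ Set.Icc c.1 b.1 := Set.Icc_subset_Icc hlc le_rfl
  have hsubd : Set.Icc d.2 p.2 ⊆ Set.Icc d.2 u.2 := Set.Icc_subset_Icc le_rfl huu
  have hsubu : Set.Icc p.2 u.2 ⊆ Set.Icc d.2 u.2 := Set.Icc_subset_Icc hld le_rfl
  rcases le_total p.2 (f p.1) with hV | hV
  · rcases le_total p.1 (g p.2) with hH | hH
    · -- V+ H+ : NW from f, SE from g, anti-diagonal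
      obtain ⟨w, hw, hwe⟩ := cross_ex (f := fun z => f z + z) hlc
        (hfcl.add continuousOn_id)
        (by show f c.1 + c.1 ≤ p.2 + p.1; rw [hf1]; linarith [hcc.2])
        (by show p.2 + p.1 ≤ f p.1 + p.1; linarith)
      obtain ⟨v, hv, hve⟩ := cross_ex (f := fun z => g z + z) hld
        (hgcl.add continuousOn_id)
        (by show g d.2 + d.2 ≤ p.1 + p.2; rw [hg1]; linarith [hdd.2])
        (by show p.1 + p.2 ≤ g p.2 + p.2; linarith)
      refine diag_mem hgc p (Or.inr rfl) (s := p.2 - v) (t := p.1 - w)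
        (by linarith [hv.2]) (by linarith [hw.2]) ?_ ?_
      · have he : (p.1 + (p.2 - v), p.2 + (-1) * (p.2 - v)) = (g v, v) := by
          rw [Prod.ext_iff]
          constructor
          · show p.1 + (p.2 - v) = g v; linarith
          · show p.2 + (-1) * (p.2 - v) = v; ring
        rw [he]; exact hgA v (hsubd hv)
      · have he : (p.1 - (p.1 - w), p.2 - (-1) * (p.1 - w)) = (w, f w) := by
          rw [Prod.ext_iff]
          constructor
          · show p.1 - (p.1 - w) = w; ring
          · show p.2 - (-1) * (p.1 - w) = f w; linarith
        rw [he]; exact hfA w (hsubl hw)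
    · -- V+ H- : NE from f, SW from g, main diagonal
      obtain ⟨w, hw, hwe⟩ := cross_ex' (f := fun z => f z - z) hub
        (hfcr.sub continuousOn_id)
        (by show f b.1 - b.1 ≤ p.2 - p.1; rw [hf2]; linarith [hbb.2])
        (by show p.2 - p.1 ≤ f p.1 - p.1; linarith)
      obtain ⟨v, hv, hve⟩ := cross_ex' (f := fun z => g z - z) hld
        (hgcl.sub continuousOn_id)
        (by show g p.2 - p.2 ≤ p.1 - p.2; linarith)
        (by show p.1 - p.2 ≤ g d.2 - d.2; rw [hg1]; linarith [hdd.1])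
      refine diag_mem hgc p (Or.inl rfl) (s := w - p.1) (t := p.2 - v)
        (by linarith [hw.1]) (by linarith [hv.2]) ?_ ?_
      · have he : (p.1 + (w - p.1), p.2 + 1 * (w - p.1)) = (w, f w) := by
          rw [Prod.ext_iff]
          constructor
          · show p.1 + (w - p.1) = w; ring
          · show p.2 + 1 * (w - p.1) = f w; linarith
        rw [he]; exact hfA w (hsubr hw)
      · have he : (p.1 - (p.2 - v), p.2 - 1 * (p.2 - v)) = (g v, v) := by
          rw [Prod.ext_iff]
          constructor
          · show p.1 - (p.2 - v) = g v; linarith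
          · show p.2 - 1 * (p.2 - v) = v; ring
        rw [he]; exact hgA v (hsubd hv)
  · rcases le_total p.1 (g p.2) with hH | hH
    · -- V- H+ : NE from g, SW from f, main diagonal
      obtain ⟨v, hv, hve⟩ := cross_ex' (f := fun z => g z - z) huu
        (hgcr.sub continuousOn_id)
        (by show g u.2 - u.2 ≤ p.1 - p.2; rw [hg2]; linarith [huub.2])
        (by show p.1 - p.2 ≤ g p.2 - p.2; linarith)
      obtain ⟨w, hw, hwe⟩ := cross_ex' (f := fun z => f z - z) hlc
        (hfcl.sub continuousOn_id)
        (by show f p.1 - p.1 ≤ p.2 - p.1; linarith)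
        (by show p.2 - p.1 ≤ f c.1 - c.1; rw [hf1]; linarith [hcc.1])
      refine diag_mem hgc p (Or.inl rfl) (s := v - p.2) (t := p.1 - w)
        (by linarith [hv.1]) (by linarith [hw.2]) ?_ ?_
      · have he : (p.1 + (v - p.2), p.2 + 1 * (v - p.2)) = (g v, v) := by
          rw [Prod.ext_iff]
          constructor
          · show p.1 + (v - p.2) = g v; linarith
          · show p.2 + 1 * (v - p.2) = v; ring
        rw [he]; exact hgA v (hsubu hv)
      · have he : (p.1 - (p.1 - w), p.2 - 1 * (p.1 - w)) = (w, f w) := by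
          rw [Prod.ext_iff]
          constructor
          · show p.1 - (p.1 - w) = w; ring
          · show p.2 - 1 * (p.1 - w) = f w; linarith
        rw [he]; exact hfA w (hsubl hw)
    · -- V- H- : SE from f, NW from g, anti-diagonal
      obtain ⟨w, hw, hwe⟩ := cross_ex (f := fun z => f z + z) hub
        (hfcr.add continuousOn_id)
        (by show f p.1 + p.1 ≤ p.2 + p.1; linarith)
        (by show p.2 + p.1 ≤ f b.1 + b.1; rw [hf2]; linarith [hbb.1])
      obtain ⟨v, hv, hve⟩ := cross_ex (f := fun z => g z + z) huu
        (hgcr.add continuousOn_id)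
        (by show g p.2 + p.2 ≤ p.1 + p.2; linarith)
        (by show p.1 + p.2 ≤ g u.2 + u.2; rw [hg2]; linarith [huub.1])
      refine diag_mem hgc p (Or.inr rfl) (s := w - p.1) (t := v - p.2)
        (by linarith [hw.1]) (by linarith [hv.1]) ?_ ?_
      · have he : (p.1 + (w - p.1), p.2 + (-1) * (w - p.1)) = (w, f w) := by
          rw [Prod.ext_iff]
          constructor
          · show p.1 + (w - p.1) = w; ring
          · show p.2 + (-1) * (w - p.1) = f w; linarith
        rw [he]; exact hfA w (hsubr hw)
      · have he : (p.1 - (v - p.2), p.2 - (-1) * (v - p.2)) = (g v, v) := by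
          rw [Prod.ext_iff]
          constructor
          · show p.1 - (v - p.2) = g v; linarith
          · show p.2 - (-1) * (v - p.2) = v; ring
        rw [he]; exact hgA v (hsubu hv)

/-- Three-sectors case: if `A ⊆ ℝ²_∞` is closed and geodesically convex,
`p ∉ A`, and the sectors `S₁^+(p)`, `S₂^+(p)`, `S₂^−(p)` all meet `A`, then the
horizontal ray to the right of `p` meets `A`, and its first intersection point
`q = (p₁ + t₀, p₂)` satisfies `d∞(a,q) ≤ d∞(a,p)` for all `a ∈ A`. -/
theorem three_sectors_case (A : Set (ℝ × ℝ)) (hcl : IsClosed A) (hgc : GeodConvex A)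
    (p : ℝ × ℝ) (hp : p ∉ A)
    (h1p : (sector1 1 p ∩ A).Nonempty)
    (h2p : (sector2 1 p ∩ A).Nonempty) (h2m : (sector2 (-1) p ∩ A).Nonempty) :
    ∃ t₀ : ℝ, IsLeast {t : ℝ | 0 ≤ t ∧ (p.1 + t, p.2) ∈ A} t₀ ∧
      ∀ a ∈ A, dist a (p.1 + t₀, p.2) ≤ dist a p := by
  obtain ⟨b, hbsec, hbA⟩ := h1p
  obtain ⟨u, husec, huA⟩ := h2p
  obtain ⟨d, hdsec, hdA⟩ := h2m
  have hb' : |b.2 - p.2| ≤ b.1 - p.1 := by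
    have h : dist p b = 1 * (b.1 - p.1) := hbsec
    rw [dist_pair, one_mul] at h
    calc |b.2 - p.2| = |p.2 - b.2| := abs_sub_comm _ _
      _ ≤ max |p.1 - b.1| |p.2 - b.2| := le_max_right _ _
      _ = b.1 - p.1 := h
  have hu' : |u.1 - p.1| ≤ u.2 - p.2 := by
    have h : dist p u = 1 * (u.2 - p.2) := husec
    rw [dist_pair, one_mul] at h
    calc |u.1 - p.1| = |p.1 - u.1| := abs_sub_comm _ _
      _ ≤ max |p.1 - u.1| |p.2 - u.2| := le_max_left _ _
      _ = u.2 - p.2 := h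
  have hd' : |d.1 - p.1| ≤ p.2 - d.2 := by
    have h : dist p d = -1 * (d.2 - p.2) := hdsec
    rw [dist_pair] at h
    rw [show (-1 : ℝ) * (d.2 - p.2) = p.2 - d.2 by ring] at h
    calc |d.1 - p.1| = |p.1 - d.1| := abs_sub_comm _ _
      _ ≤ max |p.1 - d.1| |p.2 - d.2| := le_max_left _ _
      _ = p.2 - d.2 := h
  have huu : p.2 ≤ u.2 := by linarith [abs_nonneg (u.1 - p.1)]
  have hld : d.2 ≤ p.2 := by linarith [abs_nonneg (d.1 - p.1)]
  set T : Set ℝ := {t : ℝ | 0 ≤ t ∧ (p.1 + t, p.2) ∈ A} with hTdef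
  -- T is nonempty
  have hTne : T.Nonempty := by
    obtain ⟨g, hg1, hg2, hgA, hglip, hgcont⟩ := graph_v hgc hdA huA (by
      have h1 := abs_sub_le u.1 p.1 d.1
      rw [abs_sub_comm p.1 d.1] at h1
      linarith)
    have hmA : (g p.2, p.2) ∈ A := hgA p.2 ⟨hld, huu⟩
    rcases le_or_gt p.1 (g p.2) with hge | hlt
    · refine ⟨g p.2 - p.1, ?_⟩
      show 0 ≤ g p.2 - p.1 ∧ (p.1 + (g p.2 - p.1), p.2) ∈ A
      constructor
      · linarith
      · rw [show p.1 + (g p.2 - p.1) = g p.2 by ring]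
        exact hmA
    · exfalso
      apply hp
      exact four_sectors hgc p hbA hb' hmA
        (by show |(g p.2, p.2).2 - p.2| ≤ p.1 - (g p.2, p.2).1
            simp only
            rw [sub_self, abs_zero]; linarith)
        huA hu' hdA hd'
  have hbdd : BddBelow T := ⟨0, fun t ht => ht.1⟩
  have hTclosed : IsClosed T := by
    have hT2 : T = Set.Ici (0:ℝ) ∩ (fun t : ℝ => (p.1 + t, p.2)) ⁻¹' A := by
      ext t
      simp [hTdef, Set.mem_Ici]
    rw [hT2]
    exact isClosed_Ici.inter (hcl.preimage (by continuity))
  have ht₀ : sInf T ∈ T := hTclosed.csInf_mem hTne hbdd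
  have ht₀pos : 0 < sInf T := by
    rcases lt_or_eq_of_le ht₀.1 with h | h
    · exact h
    · exfalso
      apply hp
      have := ht₀.2
      rw [← h, add_zero] at this
      exact this
  -- the key contradiction lemma
  have key : ∀ z : ℝ, (z, p.2) ∈ A → z < p.1 + sInf T → False := by
    intro z hz hlt
    rcases le_or_gt p.1 z with h | h
    · have hmem : z - p.1 ∈ T := by
        show 0 ≤ z - p.1 ∧ (p.1 + (z - p.1), p.2) ∈ A
        constructor
        · linarith
        · rw [show p.1 + (z - p.1) = z by ring]; exact hz
      have := csInf_le hbdd hmem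
      linarith
    · apply hp
      exact four_sectors hgc p hbA hb' hz
        (by show |(z, p.2).2 - p.2| ≤ p.1 - (z, p.2).1
            simp only
            rw [sub_self, abs_zero]; linarith)
        huA hu' hdA hd'
  refine ⟨sInf T, ⟨ht₀, fun t ht => csInf_le hbdd ht⟩, ?_⟩
  intro a ha
  by_contra hcon
  push_neg at hcon
  rw [dist_pair, dist_pair] at hcon
  have hq2 : (p.1 + sInf T, p.2).2 = p.2 := rfl
  have hq1 : (p.1 + sInf T, p.2).1 = p.1 + sInf T := rfl
  rw [hq1, hq2] at hcon
  -- hcon : max |a.1 - p.1| |a.2 - p.2| < max |a.1 - (p.1 + sInf T)| |a.2 - p.2|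
  have h2 : |a.2 - p.2| < |a.1 - (p.1 + sInf T)| := by
    rcases lt_max_iff.mp (lt_of_le_of_lt (le_max_right |a.1 - p.1| |a.2 - p.2|) hcon)
      with h | h
    · exact h
    · exact absurd h (lt_irrefl _)
  have h1 : |a.1 - p.1| < |a.1 - (p.1 + sInf T)| := by
    rcases lt_max_iff.mp (lt_of_le_of_lt (le_max_left |a.1 - p.1| |a.2 - p.2|) hcon)
      with h | h
    · exact h
    · exact lt_trans h h2
  have ha1 : a.1 < p.1 + sInf T := by
    by_contra hge
    push_neg at hge
    rw [show |a.1 - (p.1 + sInf T)| = a.1 - (p.1 + sInf T) from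
      abs_of_nonneg (by linarith)] at h1
    have h3 := le_abs_self (a.1 - p.1)
    have h4 := ht₀.1
    linarith
  have habs : |a.1 - (p.1 + sInf T)| = p.1 + sInf T - a.1 := by
    rw [abs_of_nonpos (by linarith)]; ring
  rw [habs] at h1 h2
  rcases lt_trichotomy a.2 p.2 with hlt2 | heq2 | hgt2
  · -- a strictly below the horizontal line: use u
    have hD2 : p.2 - a.2 < p.1 + sInf T - a.1 := by
      rw [abs_of_nonpos (by linarith)] at h2; linarith
    rcases le_or_gt |u.1 - a.1| (u.2 - a.2) with hdom | hndom
    · -- vertical-dominant geodesic a → u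
      obtain ⟨g, hg1, hg2, hgA, hglip, hgcont⟩ := graph_v hgc ha huA hdom
      have hpin : p.2 ∈ Set.Icc a.2 u.2 := ⟨le_of_lt hlt2, huu⟩
      have hzA : (g p.2, p.2) ∈ A := hgA p.2 hpin
      have hlipz := hglip p.2 hpin a.2 ⟨le_rfl, by linarith⟩
      rw [hg1] at hlipz
      rw [show |p.2 - a.2| = p.2 - a.2 from abs_of_nonneg (by linarith)] at hlipz
      have := (abs_le.mp hlipz).2
      exact key (g p.2) hzA (by linarith)
    · rcases le_or_gt u.1 a.1 with hle | hgt
      · -- horizontal-dominant, u to the left of a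
        have habs1 : |u.1 - a.1| = a.1 - u.1 := by
          rw [abs_of_nonpos (by linarith)]; ring
        obtain ⟨f, hf1, hf2, hfA, hflip, hfc⟩ := graph_h hgc huA ha (by
          rw [show |a.2 - u.2| = u.2 - a.2 by rw [abs_of_nonpos (by linarith)]; ring]
          rw [habs1] at hndom
          linarith)
        obtain ⟨xf, hxf, hfe⟩ := cross_ex' (y := p.2) hle hfc
          (by rw [hf2]; linarith) (by rw [hf1]; linarith)
        have hzA : (xf, p.2) ∈ A := by
          rw [← hfe]; exact hfA xf hxf
        exact key xf hzA (by linarith [hxf.2])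
      · -- horizontal-dominant, u to the right of a
        have habs1 : |u.1 - a.1| = u.1 - a.1 := abs_of_nonneg (by linarith)
        rw [habs1] at hndom
        obtain ⟨f, hf1, hf2, hfA, hflip, hfc⟩ := graph_h hgc ha huA (by
          rw [show |u.2 - a.2| = u.2 - a.2 from abs_of_nonneg (by linarith)]
          linarith)
        set x₀ : ℝ := a.1 + (p.2 - a.2) with hx₀def
        have hx₀ : x₀ ∈ Set.Icc a.1 u.1 := ⟨by linarith, by linarith⟩
        have hup : f x₀ ≤ p.2 := by
          have h := hflip x₀ hx₀ a.1 ⟨le_rfl, by linarith [hx₀.2]⟩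
          rw [hf1, show |x₀ - a.1| = p.2 - a.2 by
            rw [hx₀def, show a.1 + (p.2 - a.2) - a.1 = p.2 - a.2 by ring]
            exact abs_of_nonneg (by linarith)] at h
          linarith [(abs_le.mp h).2]
        obtain ⟨xf, hxf, hfe⟩ := cross_ex (y := p.2) hx₀.2
          (hfc.mono (Set.Icc_subset_Icc hx₀.1 le_rfl))
          hup (by rw [hf2]; linarith)
        have hxfI : xf ∈ Set.Icc a.1 u.1 := ⟨le_trans hx₀.1 hxf.1, hxf.2⟩
        have hlow : p.2 + (xf - p.1) ≤ f xf := by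
          have h := hflip xf hxfI u.1 ⟨le_trans hxfI.1 hxfI.2, le_rfl⟩
          rw [hf2, show |xf - u.1| = u.1 - xf by
            rw [abs_of_nonpos (by linarith [hxfI.2])]; ring] at h
          have h1' := (abs_le.mp h).1
          have h2' := (abs_le.mp hu').2
          linarith
        rw [hfe] at hlow
        have hzA : (xf, p.2) ∈ A := by rw [← hfe]; exact hfA xf hxfI
        exact key xf hzA (by linarith)
  · -- a on the horizontal line
    have hzA : (a.1, p.2) ∈ A := by
      rw [show (a.1, p.2) = a from Prod.ext_iff.mpr ⟨rfl, heq2.symm⟩]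
      exact ha
    exact key a.1 hzA ha1
  · -- a strictly above the horizontal line: use d
    have hD2 : a.2 - p.2 < p.1 + sInf T - a.1 := by
      rw [abs_of_nonneg (by linarith)] at h2; linarith
    rcases le_or_gt |a.1 - d.1| (a.2 - d.2) with hdom | hndom
    · -- vertical-dominant geodesic d → a
      obtain ⟨g, hg1, hg2, hgA, hglip, hgcont⟩ := graph_v hgc hdA ha hdom
      have hpin : p.2 ∈ Set.Icc d.2 a.2 := ⟨hld, le_of_lt hgt2⟩
      have hzA : (g p.2, p.2) ∈ A := hgA p.2 hpin
      have hlipz := hglip p.2 hpin a.2 ⟨by linarith, le_rfl⟩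
      rw [hg2] at hlipz
      rw [show |p.2 - a.2| = a.2 - p.2 by
        rw [abs_of_nonpos (by linarith)]; ring] at hlipz
      have := (abs_le.mp hlipz).2
      exact key (g p.2) hzA (by linarith)
    · rcases le_or_gt d.1 a.1 with hle | hgt
      · -- horizontal-dominant, d to the left of a
        have habs1 : |a.1 - d.1| = a.1 - d.1 := abs_of_nonneg (by linarith)
        rw [habs1] at hndom
        obtain ⟨f, hf1, hf2, hfA, hflip, hfc⟩ := graph_h hgc hdA ha (by
          rw [show |a.2 - d.2| = a.2 - d.2 from abs_of_nonneg (by linarith)]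
          linarith)
        obtain ⟨xf, hxf, hfe⟩ := cross_ex (y := p.2) hle hfc
          (by rw [hf1]; linarith) (by rw [hf2]; linarith)
        have hzA : (xf, p.2) ∈ A := by rw [← hfe]; exact hfA xf hxf
        exact key xf hzA (by linarith [hxf.2])
      · -- horizontal-dominant, d to the right of a
        have habs1 : |a.1 - d.1| = d.1 - a.1 := by
          rw [abs_of_nonpos (by linarith)]; ring
        rw [habs1] at hndom
        obtain ⟨f, hf1, hf2, hfA, hflip, hfc⟩ := graph_h hgc ha hdA (by
          rw [show |d.2 - a.2| = a.2 - d.2 by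
            rw [abs_of_nonpos (by linarith)]; ring]
          linarith)
        set x₀ : ℝ := a.1 + (a.2 - p.2) with hx₀def
        have hx₀ : x₀ ∈ Set.Icc a.1 d.1 := ⟨by linarith, by linarith⟩
        have hup : p.2 ≤ f x₀ := by
          have h := hflip x₀ hx₀ a.1 ⟨le_rfl, by linarith [hx₀.2]⟩
          rw [hf1, show |x₀ - a.1| = a.2 - p.2 by
            rw [hx₀def, show a.1 + (a.2 - p.2) - a.1 = a.2 - p.2 by ring]
            exact abs_of_nonneg (by linarith)] at h
          linarith [(abs_le.mp h).1]
        obtain ⟨xf, hxf, hfe⟩ := cross_ex' (y := p.2) hx₀.2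
          (hfc.mono (Set.Icc_subset_Icc hx₀.1 le_rfl))
          (by rw [hf2]; linarith) hup
        have hxfI : xf ∈ Set.Icc a.1 d.1 := ⟨le_trans hx₀.1 hxf.1, hxf.2⟩
        have hhigh : f xf ≤ p.2 + (p.1 - xf) := by
          have h := hflip xf hxfI d.1 ⟨le_trans hxfI.1 hxfI.2, le_rfl⟩
          rw [hf2, show |xf - d.1| = d.1 - xf by
            rw [abs_of_nonpos (by linarith [hxfI.2])]; ring] at h
          have h1' := (abs_le.mp h).2
          have h2' := (abs_le.mp hd').2
          linarith
        rw [hfe] at hhigh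
        have hzA : (xf, p.2) ∈ A := by rw [← hfe]; exact hfA xf hxfI
        exact key xf hzA (by linarith)
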